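/- Define c_1 = 1, c_2 = 1 - 1/200, and c_i = min{Δ^{0.1}, c_{i-1}·exp(c_{i-1}/(3·200·e^{200}))} for i > 2 (where Δ ≥ 2 is a fixed integer). Then the smallest t with c_t = Δ^{0.1} satisfies t = O(log* Δ). -/

import Mathlib

/-- Fuel-based iterated logarithm. -/
def logStarAux : ℕ → ℕ → ℕ
  | 0, _ => 0
  | fuel + 1, n => if n ≤ 2 then 0 else logStarAux fuel (Nat.log 2 n) + 1

/-- The iterated logarithm `log* n`. -/
def logStar (n : ℕ) : ℕ := logStarAux n n

lemma logStarAux_congr : ∀ n f g : ℕ, n ≤ f → n ≤ g → logStarAux f n = logStarAux g n := by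
  intro n
  induction n using Nat.strong_induction_on with
  | _ n ih =>
    intro f g hf hg
    by_cases h2 : n ≤ 2
    · have key : ∀ f' : ℕ, logStarAux f' n = 0 := by
        intro f'
        cases f' with
        | zero => rfl
        | succ k => simp [logStarAux, h2]
      rw [key f, key g]
    · obtain ⟨f', rfl⟩ : ∃ f', f = f' + 1 := ⟨f - 1, by omega⟩
      obtain ⟨g', rfl⟩ : ∃ g', g = g' + 1 := ⟨g - 1, by omega⟩
      simp only [logStarAux, if_neg h2]
      have hlog : Nat.log 2 n < n := Nat.log_lt_self 2 (by omega)
      rw [ih _ hlog f' g' (by omega) (by omega)]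

lemma logStar_of_le_two {n : ℕ} (h : n ≤ 2) : logStar n = 0 := by
  unfold logStar
  cases n with
  | zero => rfl
  | succ k => simp [logStarAux, h]

lemma logStar_succ {n : ℕ} (h : 3 ≤ n) : logStar n = logStar (Nat.log 2 n) + 1 := by
  obtain ⟨k, rfl⟩ : ∃ k, n = k + 1 := ⟨n - 1, by omega⟩
  show logStarAux (k + 1) (k + 1) = _
  rw [logStarAux, if_neg (by omega)]
  have hlog : Nat.log 2 (k + 1) < k + 1 := Nat.log_lt_self 2 (by omega)
  rw [logStarAux_congr (Nat.log 2 (k + 1)) k (Nat.log 2 (k + 1)) (by omega) le_rfl]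
  rfl

/-- For `x ≥ 1000`, `A * 2^x ≤ exp x` where `A = 600 e^200`. -/
lemma exp_ge_aux (x : ℝ) (hx : (1000 : ℝ) ≤ x) :
    3 * 200 * Real.exp 200 * (2 : ℝ) ^ x ≤ Real.exp x := by
  have hlog2 : Real.log 2 < 0.6931471808 := Real.log_two_lt_d9
  have hlog2' : 0 < Real.log 2 := Real.log_pos (by norm_num)
  have h2x : (2 : ℝ) ^ x = Real.exp (Real.log 2 * x) := Real.rpow_def_of_pos (by norm_num) x
  have h1 : (100 : ℝ) ≤ x - (200 + Real.log 2 * x) := by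
    nlinarith [mul_nonneg (by linarith : (0:ℝ) ≤ x - 1000) (by linarith : (0:ℝ) ≤ 1 - Real.log 2)]
  have key : (600 : ℝ) ≤ Real.exp (x - (200 + Real.log 2 * x)) := by
    have h2 : Real.exp 100 = Real.exp 50 * Real.exp 50 := by
      rw [← Real.exp_add]; norm_num
    have h3 := Real.add_one_le_exp (50 : ℝ)
    have h4 : Real.exp 100 ≤ Real.exp (x - (200 + Real.log 2 * x)) := Real.exp_le_exp.mpr h1
    nlinarith
  have hsplit : Real.exp x = Real.exp (x - (200 + Real.log 2 * x)) * Real.exp (200 + Real.log 2 * x) := by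
    rw [← Real.exp_add]; ring_nf
  have hrhs : 3 * 200 * Real.exp 200 * (2 : ℝ) ^ x = 600 * Real.exp (200 + Real.log 2 * x) := by
    rw [h2x, Real.exp_add]; ring
  rw [hrhs, hsplit]
  have := Real.exp_pos (200 + Real.log 2 * x)
  nlinarith

set_option maxHeartbeats 2000000 in
/-- For the sequence `c 1 = 1`, `c 2 = 1 - 1/200`,
`c (i+1) = min (Δ^{0.1}) (c i · exp(c i/(3·200·e^{200})))` for `i ≥ 2`,
the first index `t` with `c t = Δ^{0.1}` satisfies `t = O(log* Δ)`. -/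
theorem stmt13 :
    ∃ C : ℝ, 0 < C ∧ ∀ Δ : ℕ, 2 ≤ Δ → ∀ c : ℕ → ℝ,
      c 1 = 1 → c 2 = 1 - 1 / 200 →
      (∀ i, 2 ≤ i →
        c (i + 1) = min ((Δ : ℝ) ^ (0.1 : ℝ))
          (c i * Real.exp (c i / (3 * 200 * Real.exp 200)))) →
      ∀ t : ℕ, c t = (Δ : ℝ) ^ (0.1 : ℝ) →
        (∀ t' < t, c t' ≠ (Δ : ℝ) ^ (0.1 : ℝ)) →
        (t : ℝ) ≤ C * (logStar Δ + 1) := by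
  set A : ℝ := 3 * 200 * Real.exp 200 with hAdef
  have hexp200 : (1 : ℝ) ≤ Real.exp 200 := Real.one_le_exp (by norm_num)
  have hApos : (0 : ℝ) < A := by positivity
  have hA1 : (1 : ℝ) ≤ A := by nlinarith
  set N : ℕ := ⌈(1011 : ℝ) * A ^ 2⌉₊ with hNdef
  have hN : (1011 : ℝ) * A ^ 2 ≤ (N : ℝ) := by rw [hNdef]; exact Nat.le_ceil _
  clear_value A N
  clear hNdef
  refine ⟨(N : ℝ) + 5, by positivity, ?_⟩
  intro Δ hΔ c hc1 hc2 hrec t ht hmin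
  set L : ℕ := logStar Δ with hLdef
  set B : ℕ := N + L + 4 with hBdef
  clear_value L B
  by_contra hcon
  push_neg at hcon
  -- B < t
  have hBC : (B : ℝ) ≤ ((N : ℝ) + 5) * (L + 1) := by
    rw [hBdef]
    push_cast
    nlinarith [(Nat.cast_nonneg N : (0:ℝ) ≤ (N:ℝ)), (Nat.cast_nonneg L : (0:ℝ) ≤ (L:ℝ))]
  have hBt : B < t := by
    have : (B : ℝ) < (t : ℝ) := lt_of_le_of_lt hBC hcon
    exact_mod_cast this
  set cap : ℝ := (Δ : ℝ) ^ (0.1 : ℝ) with hcapdef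
  have hΔ1 : (1 : ℝ) < (Δ : ℝ) := by exact_mod_cast hΔ
  have hcap1 : (1 : ℝ) < cap :=
    (Real.one_lt_rpow_iff_of_pos (by positivity)).mpr (Or.inl ⟨hΔ1, by norm_num⟩)
  have hcapΔ : cap ≤ (Δ : ℝ) := by
    calc cap ≤ (Δ : ℝ) ^ (1 : ℝ) :=
          Real.rpow_le_rpow_of_exponent_le hΔ1.le (by norm_num)
      _ = (Δ : ℝ) := Real.rpow_one _
  -- all relevant values are below the cap
  have hlt : ∀ i, 2 ≤ i → i ≤ B → c i < cap := by
    intro i h2 hB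
    have hne : c i ≠ cap := hmin i (by omega)
    rcases eq_or_lt_of_le h2 with h | h
    · rw [← h, hc2]; linarith
    · obtain ⟨j, rfl⟩ : ∃ j, i = j + 1 := ⟨i - 1, by omega⟩
      have := hrec j (by omega)
      rw [this]
      exact lt_of_le_of_ne (min_le_left _ _) (by rw [← this]; exact hne)
  -- the full (un-capped) recurrence holds below B
  have hF : ∀ i, 2 ≤ i → i + 1 ≤ B → c (i + 1) = c i * Real.exp (c i / A) := by
    intro i h2 hB
    have hr := hrec i h2
    have hli := hlt (i + 1) (by omega) hB
    rcases le_or_gt cap (c i * Real.exp (c i / A)) with h' | h'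
    · rw [hr, min_eq_left h'] at hli; exact absurd hli (lt_irrefl _)
    · rw [hr, min_eq_right h'.le]
  -- phase 1: linear growth (scaled by A)
  have phase1 : ∀ k : ℕ, 2 + k ≤ B →
      (1 - 1 / 200 : ℝ) * A + 0.99 * k ≤ A * c (2 + k) := by
    intro k
    induction k with
    | zero =>
      intro _
      rw [hc2]
      simp only [Nat.cast_zero]
      nlinarith
    | succ k ihk =>
      intro hk
      have ihk' := ihk (by omega)
      have hstep : c (2 + k + 1) = c (2 + k) * Real.exp (c (2 + k) / A) :=
        hF (2 + k) (by omega) (by omega)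
      set y := c (2 + k) with hy
      have hy995 : (1 - 1 / 200 : ℝ) ≤ y := by
        have : (0 : ℝ) ≤ 0.99 * k := by positivity
        nlinarith
      have hexp := Real.add_one_le_exp (y / A)
      have hAu : A * (y / A) = y := mul_div_cancel₀ y hApos.ne'
      have hyexp : y * (1 + y / A) ≤ y * Real.exp (y / A) := by
        have hy0 : (0 : ℝ) ≤ y := by linarith
        apply mul_le_mul_of_nonneg_left (by linarith) hy0
      have hgoal : c (2 + (k + 1)) = y * Real.exp (y / A) := hstep
      rw [hgoal]
      have hmul : A * (y * (1 + y / A)) ≤ A * (y * Real.exp (y / A)) :=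
        mul_le_mul_of_nonneg_left hyexp hApos.le
      have hexpand : A * (y * (1 + y / A)) = A * y + y * (A * (y / A)) := by ring
      rw [hAu] at hexpand
      push_cast
      nlinarith [hmul, hexpand, ihk', hy995, sq_nonneg (y - (1 - 1/200))]
  -- c (2 + N) ≥ 1000 A
  have hstart : 1000 * A ≤ c (2 + N) := by
    have h1 := phase1 N (by omega)
    have h2 : A * (1000 * A) ≤ A * c (2 + N) := by nlinarith [hN, hApos.le, sq_nonneg A]
    exact (mul_le_mul_iff_right₀ hApos).mp h2
  -- tower growth
  have tower : ∀ n : ℕ, ∀ s : ℕ, 2 ≤ s → s + logStar n + 1 ≤ B → 1000 * A ≤ c s →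
      A * ((n : ℝ) + 1) ≤ c (s + logStar n + 1) ∧ 1000 * A ≤ c (s + logStar n + 1) := by
    intro n
    induction n using Nat.strong_induction_on with
    | _ n ih =>
      intro s hs hsB hcs
      by_cases h2 : n ≤ 2
      · have hL0 : logStar n = 0 := logStar_of_le_two h2
        rw [hL0] at hsB ⊢
        have hstep : c (s + 0 + 1) = c s * Real.exp (c s / A) := hF s hs (by omega)
        have hcs0 : (0 : ℝ) ≤ c s := by nlinarith
        have hexp : (1 : ℝ) ≤ Real.exp (c s / A) := Real.one_le_exp (div_nonneg hcs0 hApos.le)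
        have hmono : c s ≤ c s * Real.exp (c s / A) := le_mul_of_one_le_right hcs0 hexp
        have hn3 : ((n : ℝ) + 1) ≤ 3 := by
          have : (n : ℝ) ≤ 2 := by exact_mod_cast h2
          linarith
        rw [hstep]
        constructor <;> nlinarith
      · have h3 : 3 ≤ n := by omega
        have hLs : logStar n = logStar (Nat.log 2 n) + 1 := logStar_succ h3
        set m := Nat.log 2 n with hm
        have hmlt : m < n := Nat.log_lt_self 2 (by omega)
        rw [hLs] at hsB ⊢
        obtain ⟨h1, h2'⟩ := ih m hmlt s hs (by omega) hcs
        set s1 := s + logStar m + 1 with hs1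
        have hidx : s + (logStar m + 1) + 1 = s1 + 1 := by omega
        rw [hidx]
        have hstep : c (s1 + 1) = c s1 * Real.exp (c s1 / A) := hF s1 (by omega) (by omega)
        have hxA : (1000 : ℝ) ≤ c s1 / A := by
          rw [le_div_iff₀ hApos]; linarith
        have hxm : ((m : ℝ) + 1) ≤ c s1 / A := by
          rw [le_div_iff₀ hApos]; nlinarith
        have hE : A * (2 : ℝ) ^ (c s1 / A) ≤ Real.exp (c s1 / A) := by
          have h := exp_ge_aux (c s1 / A) hxA
          rw [← hAdef] at h
          exact h
        have h2pow : ((n : ℝ) + 1) ≤ (2 : ℝ) ^ (c s1 / A) := by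
          have hnat : n < 2 ^ (m + 1) := Nat.lt_pow_succ_log_self (by norm_num) n
          have hnat' : n + 1 ≤ 2 ^ (m + 1) := hnat
          have hcast : ((n : ℝ) + 1) ≤ (2 : ℝ) ^ (m + 1 : ℕ) := by exact_mod_cast hnat'
          have heq : (2 : ℝ) ^ (((m : ℝ)) + 1) = (2 : ℝ) ^ (m + 1 : ℕ) := by
            rw [← Real.rpow_natCast (2 : ℝ) (m + 1)]; push_cast; ring_nf
          have hmono : (2 : ℝ) ^ (((m : ℝ)) + 1) ≤ (2 : ℝ) ^ (c s1 / A) :=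
            Real.rpow_le_rpow_of_exponent_le (by norm_num) hxm
          rw [heq] at hmono
          linarith
        have hc1 : (1 : ℝ) ≤ c s1 := by nlinarith
        have hexp1 : (1 : ℝ) ≤ Real.exp (c s1 / A) :=
          Real.one_le_exp (div_nonneg (by nlinarith) hApos.le)
        constructor
        · calc A * ((n : ℝ) + 1) ≤ A * ((2 : ℝ) ^ (c s1 / A)) :=
                mul_le_mul_of_nonneg_left h2pow hApos.le
            _ ≤ Real.exp (c s1 / A) := hE
            _ ≤ c s1 * Real.exp (c s1 / A) :=
                le_mul_of_one_le_left (Real.exp_pos _).le hc1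
            _ = c (s1 + 1) := hstep.symm
        · rw [hstep]; nlinarith
  -- contradiction
  obtain ⟨hfin, -⟩ := tower Δ (2 + N) (by omega) (by omega) hstart
  have hltfin : c (2 + N + logStar Δ + 1) < cap := hlt _ (by omega) (by omega)
  have hΔcast : (1 : ℝ) ≤ (Δ : ℝ) := by linarith
  nlinarith
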